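/- Let 0 < λ ≤ π/4 and arcsin(tan λ) ≤ y < π/2, and consider an isosceles spherical triangle with apex p, base vertices q₁, q₂, base length 2y and legs of length 2x, such that the great circle through the midpoints of [q₁,q₂] and [p,q₁] is at spherical distance λ from p, q₁ and q₂. Then sin(2x) = cos λ · sin² y / √(sin² y − sin² λ). -/

import Mathlib

open Real RealInnerProductSpace

lemma my_det_fin_four (a b c d e f g h i j k m n o q r : ℝ) :
    (Matrix.det !![a,b,c,d; e,f,g,h; i,j,k,m; n,o,q,r]) =
      a*(f*(k*r-m*q) - g*(j*r-m*o) + h*(j*q-k*o))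
      - b*(e*(k*r-m*q) - g*(i*r-m*n) + h*(i*q-k*n))
      + c*(e*(j*r-m*o) - f*(i*r-m*n) + h*(i*o-j*n))
      - d*(e*(j*q-k*o) - f*(i*q-k*n) + g*(i*o-j*n)) := by
  simp [Matrix.det_succ_row_zero, Fin.sum_univ_succ, Fin.succAbove]
  ring

set_option maxHeartbeats 1000000 in
/-- Spherical version: on the unit sphere `S² ⊆ ℝ³`, consider an isosceles spherical
triangle with apex `p`, base vertices `q₁,q₂`, base length `2y` and legs `2x` (encoded
by inner products: spherical distance `d(u,v)` satisfies `cos d = ⟪u,v⟫`).  Assume a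
great circle (the intersection of `S²` with the plane `{z | ⟪n,z⟫ = 0}` for a unit
vector `n`) passes through the spherical midpoints of `[q₁,q₂]` and `[p,q₁]` and lies at
spherical distance `λ` from `p`, `q₁` and `q₂` (with `p` and `q₁` on opposite sides;
the distance of a unit vector `u` from the great circle is `arcsin |⟪n,u⟫|`).  Then
`sin 2x = cos λ · sin² y / √(sin² y − sin² λ)`. -/
theorem stmt14 (l x y : ℝ) (hl : 0 < l) (hl4 : l ≤ π / 4)
    (hy1 : arcsin (tan l) ≤ y) (hy2 : y < π / 2)
    (hx0 : 0 < x) (hx2 : x < π / 2)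
    (p q1 q2 n : EuclideanSpace ℝ (Fin 3))
    (hpu : ‖p‖ = 1) (hq1u : ‖q1‖ = 1) (hq2u : ‖q2‖ = 1) (hnu : ‖n‖ = 1)
    (hbase : ⟪q1, q2⟫ = Real.cos (2 * y))
    (hleg1 : ⟪p, q1⟫ = Real.cos (2 * x))
    (hleg2 : ⟪p, q2⟫ = Real.cos (2 * x))
    (hmid1 : ⟪n, q1 + q2⟫ = 0) (hmid2 : ⟪n, p + q1⟫ = 0)
    (hp : ⟪n, p⟫ = Real.sin l)
    (hq1 : ⟪n, q1⟫ = -Real.sin l)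
    (hq2 : ⟪n, q2⟫ = Real.sin l ∨ ⟪n, q2⟫ = -Real.sin l) :
    Real.sin (2 * x) = Real.cos l * Real.sin y ^ 2 / Real.sqrt (Real.sin y ^ 2 - Real.sin l ^ 2) := by
  have hnq2 : ⟪n, q2⟫ = Real.sin l := by
    rw [inner_add_right, hq1] at hmid1; linarith
  set v : Fin 4 → EuclideanSpace ℝ (Fin 3) := ![n, p, q1, q2] with hv
  have hdep : ¬ LinearIndependent ℝ v := by
    intro h
    have := h.fintype_card_le_finrank
    simp [finrank_euclideanSpace] at this
  obtain ⟨g, hsum, i0, hi0⟩ := Fintype.not_linearIndependent_iff.mp hdep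
  set G : Matrix (Fin 4) (Fin 4) ℝ := Matrix.of fun i j => ⟪v i, v j⟫ with hG
  have hGv : G.mulVec g = 0 := by
    funext i
    simp only [Matrix.mulVec, dotProduct, hG, Matrix.of_apply, Pi.zero_apply]
    have h1 : ∑ j, ⟪v i, v j⟫ * g j = ⟪v i, ∑ j, g j • v j⟫ := by
      rw [inner_sum]
      congr 1; funext j; rw [real_inner_smul_right]; ring
    rw [h1, hsum, inner_zero_right]
  have hdet : G.det = 0 :=
    Matrix.exists_mulVec_eq_zero_iff.mp ⟨g, fun h => hi0 (congrFun h i0), hGv⟩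
  have hself : ∀ (u : EuclideanSpace ℝ (Fin 3)), ‖u‖ = 1 → ⟪u, u⟫ = (1:ℝ) := by
    intro u hu
    rw [real_inner_self_eq_norm_sq, hu]; norm_num
  have hnn := hself _ hnu
  have hpp := hself _ hpu
  have hq1q1 := hself _ hq1u
  have hq2q2 := hself _ hq2u
  have hpn : ⟪p, n⟫ = Real.sin l := by rw [real_inner_comm]; exact hp
  have hq1n : ⟪q1, n⟫ = -Real.sin l := by rw [real_inner_comm]; exact hq1
  have hq2n : ⟪q2, n⟫ = Real.sin l := by rw [real_inner_comm]; exact hnq2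
  have hq1p : ⟪q1, p⟫ = Real.cos (2*x) := by rw [real_inner_comm]; exact hleg1
  have hq2p : ⟪q2, p⟫ = Real.cos (2*x) := by rw [real_inner_comm]; exact hleg2
  have hq2q1 : ⟪q2, q1⟫ = Real.cos (2*y) := by rw [real_inner_comm]; exact hbase
  have hGex : G = !![1, Real.sin l, -Real.sin l, Real.sin l;
      Real.sin l, 1, Real.cos (2*x), Real.cos (2*x);
      -Real.sin l, Real.cos (2*x), 1, Real.cos (2*y);
      Real.sin l, Real.cos (2*x), Real.cos (2*y), 1] := by
    ext i j
    fin_cases i <;> fin_cases j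
    exacts [hnn, hp, hq1, hnq2, hpn, hpp, hleg1, hleg2,
      hq1n, hq1p, hq1q1, hbase, hq2n, hq2p, hq2q1, hq2q2]
  rw [hGex, my_det_fin_four] at hdet
  set s := Real.sin l with hs
  set c := Real.cos l with hc
  set A := Real.sin (2*x) with hA
  set Y := Real.sin y ^ 2 with hY
  have hb : Real.cos (2*y) = 1 - 2*Y := by
    rw [Real.cos_two_mul']
    have := Real.sin_sq_add_cos_sq y; rw [← hY] at this ⊢; linarith
  have ha2 : Real.cos (2*x)^2 = 1 - A^2 := by
    have := Real.sin_sq_add_cos_sq (2*x); rw [← hA] at this; linarith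
  have hc2 : c^2 = 1 - s^2 := by
    have := Real.sin_sq_add_cos_sq l; rw [← hs, ← hc] at this; linarith
  rw [hb] at hdet
  have key : A^2 * (Y - s^2) = Y^2 * c^2 := by
    linear_combination hdet/4 + (Y - s^2) * ha2 - Y^2 * hc2
  clear hdet hGv hsum hGex
  have hl2 : l < π / 2 := lt_of_le_of_lt hl4 (by linarith [pi_pos])
  have hcl : 0 < c := hc ▸ Real.cos_pos_of_mem_Ioo ⟨by linarith, hl2⟩
  have hsl : 0 < s := hs ▸ Real.sin_pos_of_pos_of_lt_pi hl (by linarith [pi_pos])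
  have hcl1 : c < 1 := by
    have h := Real.cos_lt_cos_of_nonneg_of_le_pi (le_refl 0) (by linarith [pi_pos]) hl
    rw [Real.cos_zero] at h; exact hc ▸ h
  have hstl : s < Real.tan l := by
    rw [Real.tan_eq_sin_div_cos, ← hs, ← hc, lt_div_iff₀ hcl]
    calc s * c < s * 1 := by exact mul_lt_mul_of_pos_left hcl1 hsl
      _ = s := mul_one s
  have htl1 : Real.tan l ≤ 1 := by
    rcases eq_or_lt_of_le hl4 with h | h
    · rw [h, Real.tan_pi_div_four]
    · calc Real.tan l ≤ Real.tan (π/4) :=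
            le_of_lt (Real.tan_lt_tan_of_lt_of_lt_pi_div_two (by linarith [pi_pos]) (by linarith [pi_pos]) h)
        _ = 1 := Real.tan_pi_div_four
  have hsy : Real.tan l ≤ Real.sin y := by
    have h0 : Real.sin (arcsin (Real.tan l)) = Real.tan l :=
      Real.sin_arcsin (by linarith [lt_trans hsl hstl]) htl1
    calc Real.tan l = Real.sin (arcsin (Real.tan l)) := h0.symm
      _ ≤ Real.sin y := by
          rcases eq_or_lt_of_le hy1 with h | h
          · rw [h]
          · exact le_of_lt (Real.sin_lt_sin_of_lt_of_le_pi_div_two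
              (Real.neg_pi_div_two_le_arcsin _) (le_of_lt hy2) h)
  have hYs : s^2 < Y := by
    have h1 : s < Real.sin y := lt_of_lt_of_le hstl hsy
    rw [hY]
    exact pow_lt_pow_left₀ h1 (le_of_lt hsl) (by norm_num)
  have hA0 : 0 < A := by
    rw [hA]
    exact Real.sin_pos_of_pos_of_lt_pi (by linarith) (by linarith)
  have hY0 : 0 < Y := lt_of_le_of_lt (sq_nonneg s) hYs
  have hsq : Real.sqrt (Y - s^2) > 0 := Real.sqrt_pos.mpr (by linarith)
  rw [eq_div_iff (ne_of_gt hsq)]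
  have h1 : (A * Real.sqrt (Y - s^2))^2 = (c * Y)^2 := by
    rw [mul_pow, Real.sq_sqrt (by linarith : (0:ℝ) ≤ Y - s^2)]
    linear_combination key
  have h2 : A * Real.sqrt (Y - s^2) = c * Y := by
    have hlhs : 0 < A * Real.sqrt (Y - s^2) := mul_pos hA0 hsq
    have hrhs : 0 < c * Y := mul_pos hcl hY0
    have h3 : A * Real.sqrt (Y - s^2) = Real.sqrt ((c * Y)^2) := by
      rw [← h1, Real.sqrt_sq hlhs.le]
    rw [Real.sqrt_sq hrhs.le] at h3
    exact h3
  linarith [h2]
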